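/- Let ζ ∈ ℂ with |ζ| = 1 and let u : ℕ → 𝔻 be a sequence converging to ζ. Then for every R > 0 the horosphere E_0(u, R) of u with respect to the Poincaré distance and base point 0 equals the classical horosphere E(ζ, R) := {z ∈ 𝔻 : |ζ − z|²/(1 − |z|²) < R}; in particular u is an admissible sequence with respect to the base point 0. -/

import Mathlib

open Filter Set

noncomputable section

/-- The inverse hyperbolic tangent: `artanh r = (1/2) log ((1+r)/(1-r))`. -/
def artanh (r : ℝ) : ℝ := (1 / 2) * Real.log ((1 + r) / (1 - r))

/-- The Poincaré (Kobayashi) distance on the unit disc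
`ρ(z,w) = artanh |(z - w)/(1 - conj w * z)|`. -/
def pd (z w : ℂ) : ℝ := artanh (Norm.norm ((z - w) / (1 - (starRingEnd ℂ) w * z)))

/-- The horosphere in the unit disc of a sequence `u` with respect to base point `x`
and radius `R`. -/
def discE (x : ℂ) (u : ℕ → ℂ) (R : ℝ) : Set ℂ :=
  {z : ℂ | Norm.norm z < 1 ∧
    Filter.limsup (fun n => pd z (u n) - pd x (u n)) Filter.atTop < (1 / 2) * Real.log R}

lemma normSq_identity (z w : ℂ) :
    Complex.normSq (1 - (starRingEnd ℂ) w * z) - Complex.normSq (z - w)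
      = (1 - Complex.normSq z) * (1 - Complex.normSq w) := by
  simp [Complex.normSq_apply, Complex.mul_re, Complex.mul_im, Complex.sub_re, Complex.sub_im,
    Complex.conj_re, Complex.conj_im]; ring

lemma sq_identity (z w : ℂ) :
    (Norm.norm (1 - (starRingEnd ℂ) w * z))^2 - (Norm.norm (z - w))^2
      = (1 - (Norm.norm z)^2) * (1 - (Norm.norm w)^2) := by
  simpa [Complex.sq_norm] using normSq_identity z w

lemma myAbs_lt (z w : ℂ) (hz : Norm.norm z < 1) (hw : Norm.norm w < 1) :
    Norm.norm (z - w) < Norm.norm (1 - (starRingEnd ℂ) w * z) := by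
  have h := sq_identity z w
  have hz2 : (Norm.norm z)^2 < 1 := by nlinarith [norm_nonneg z]
  have hw2 : (Norm.norm w)^2 < 1 := by nlinarith [norm_nonneg w]
  have hlt : (Norm.norm (z - w))^2 < (Norm.norm (1 - (starRingEnd ℂ) w * z))^2 := by
    nlinarith
  exact lt_of_pow_lt_pow_left₀ 2 (norm_nonneg _) hlt

lemma pd_zero (w : ℂ) : pd 0 w = artanh (Norm.norm w) := by
  simp [pd]

lemma pd_eq (z w : ℂ) (hz : Norm.norm z < 1) (hw : Norm.norm w < 1) :
    pd z w = (1/2) * Real.log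
      ((Norm.norm (1 - (starRingEnd ℂ) w * z) + Norm.norm (z - w))^2
        / ((1 - (Norm.norm z)^2) * (1 - (Norm.norm w)^2))) := by
  set A := Norm.norm (1 - (starRingEnd ℂ) w * z) with hA
  set B := Norm.norm (z - w) with hB
  have hBA : B < A := myAbs_lt z w hz hw
  have hB0 : 0 ≤ B := norm_nonneg _
  have hA0 : 0 < A := lt_of_le_of_lt hB0 hBA
  have hid : A^2 - B^2 = (1 - (Norm.norm z)^2) * (1 - (Norm.norm w)^2) := sq_identity z w
  have hdiv : Norm.norm ((z - w) / (1 - (starRingEnd ℂ) w * z)) = B / A := by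
    rw [norm_div]
  rw [pd, hdiv, artanh]
  congr 1
  have hAB : A - B ≠ 0 := by linarith
  have h1BA : (1:ℝ) - B / A ≠ 0 := by
    have : B / A < 1 := (div_lt_one hA0).mpr hBA
    linarith
  have h1 : (1 + B / A) / (1 - B / A) = (A + B) / (A - B) := by
    rw [div_eq_div_iff h1BA hAB]
    field_simp
  rw [h1]
  have h2 : (A + B) / (A - B) = (A + B)^2 / (A^2 - B^2) := by
    rw [div_eq_div_iff (by linarith) (by nlinarith)]
    ring
  rw [h2, hid]

lemma pd_sub (z w : ℂ) (hz : Norm.norm z < 1) (hw : Norm.norm w < 1) :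
    pd z w - pd 0 w = (1/2) * Real.log
      ((Norm.norm (1 - (starRingEnd ℂ) w * z) + Norm.norm (z - w))^2
        / ((1 - (Norm.norm z)^2) * (1 + Norm.norm w)^2)) := by
  set A := Norm.norm (1 - (starRingEnd ℂ) w * z) with hA
  set B := Norm.norm (z - w) with hB
  set s := Norm.norm w with hs
  have hBA : B < A := myAbs_lt z w hz hw
  have hB0 : 0 ≤ B := norm_nonneg _
  have hA0 : 0 < A := lt_of_le_of_lt hB0 hBA
  have hs0 : 0 ≤ s := norm_nonneg _
  have hs1 : s < 1 := hw
  have hz1 : (Norm.norm z)^2 < 1 := by nlinarith [norm_nonneg z]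
  rw [pd_eq z w hz hw, pd_zero, artanh, ← mul_sub]
  congr 1
  have hX : (0:ℝ) < (A + B)^2 / ((1 - (Norm.norm z)^2) * (1 - s^2)) := by
    apply div_pos (by positivity)
    apply mul_pos (by linarith) (by nlinarith)
  have hY : (0:ℝ) < (1 + s) / (1 - s) := by
    apply div_pos (by linarith) (by linarith)
  rw [← Real.log_div (ne_of_gt hX) (ne_of_gt hY)]
  congr 1
  have h1s : (1:ℝ) - s ≠ 0 := by linarith
  have h1s' : (1:ℝ) + s ≠ 0 := by linarith
  have hz' : (1:ℝ) - (Norm.norm z)^2 ≠ 0 := by linarith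
  rw [div_div]
  congr 1
  field_simp
  ring

theorem discE_eq_classical_horosphere (ζ : ℂ) (hζ : Norm.norm ζ = 1)
    (u : ℕ → ℂ) (hu : ∀ n, Norm.norm (u n) < 1)
    (hconv : Filter.Tendsto u Filter.atTop (nhds ζ)) :
    (∀ R > (0 : ℝ), discE 0 u R =
      {z : ℂ | Norm.norm z < 1 ∧ (Norm.norm (ζ - z)) ^ 2 / (1 - (Norm.norm z) ^ 2) < R}) ∧
    (Filter.Tendsto (fun n => pd 0 (u n)) Filter.atTop Filter.atTop ∧
      ∀ R > (0 : ℝ), (discE 0 u R).Nonempty) := by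
  -- limsup computation
  have key : ∀ z : ℂ, Norm.norm z < 1 →
      Filter.Tendsto (fun n => pd z (u n) - pd 0 (u n)) Filter.atTop
        (nhds ((1/2) * Real.log ((Norm.norm (ζ - z))^2 / (1 - (Norm.norm z)^2)))) := by
    intro z hz
    have hzζ : z ≠ ζ := by
      intro h; rw [h, hζ] at hz; exact lt_irrefl 1 hz
    have habsζz : 0 < Norm.norm (ζ - z) := by
      rw [norm_pos_iff]
      intro h; exact hzζ (by linear_combination -h)
    have hz2 : (Norm.norm z)^2 < 1 := by nlinarith [norm_nonneg z]
    -- |1 - conj ζ * z| = |ζ - z|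
    have hconjζ : Norm.norm (1 - (starRingEnd ℂ) ζ * z) = Norm.norm (ζ - z) := by
      have h1 : (starRingEnd ℂ) ζ * ζ = 1 := by
        rw [← Complex.normSq_eq_conj_mul_self]
        simp [← Complex.sq_norm, hζ]
      calc Norm.norm (1 - (starRingEnd ℂ) ζ * z)
          = Norm.norm ((starRingEnd ℂ) ζ * (ζ - z)) := by rw [mul_sub, h1]
        _ = Norm.norm (ζ - z) := by
            rw [norm_mul, Complex.norm_conj, hζ, one_mul]
    -- continuity of the expression in w at ζ
    have hcont : Filter.Tendsto
        (fun w : ℂ => (Norm.norm (1 - (starRingEnd ℂ) w * z) + Norm.norm (z - w))^2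
          / ((1 - (Norm.norm z)^2) * (1 + Norm.norm w)^2))
        (nhds ζ)
        (nhds ((Norm.norm (ζ - z))^2 / (1 - (Norm.norm z)^2))) := by
    -- value at ζ
      have hval : (Norm.norm (1 - (starRingEnd ℂ) ζ * z) + Norm.norm (z - ζ))^2
          / ((1 - (Norm.norm z)^2) * (1 + Norm.norm ζ)^2)
          = (Norm.norm (ζ - z))^2 / (1 - (Norm.norm z)^2) := by
        have hswap : Norm.norm (z - ζ) = Norm.norm (ζ - z) := norm_sub_rev z ζ
        rw [hconjζ, hζ, hswap]
        rw [div_eq_div_iff (by nlinarith) (by linarith)]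
        ring
      rw [← hval]
      apply ContinuousAt.tendsto
      have c1 : Continuous fun w : ℂ => Norm.norm (1 - (starRingEnd ℂ) w * z) :=
        continuous_norm.comp (continuous_const.sub (Complex.continuous_conj.mul continuous_const))
      have c2 : Continuous fun w : ℂ => Norm.norm (z - w) :=
        continuous_norm.comp (continuous_const.sub continuous_id)
      apply ContinuousAt.div
      · exact ((c1.add c2).pow 2).continuousAt
      · exact (continuous_const.mul ((continuous_const.add continuous_norm).pow 2)).continuousAt
      · rw [hζ]
        exact ne_of_gt (mul_pos (by linarith) (by norm_num))
    have hlog : Filter.Tendsto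
        (fun w : ℂ => (1/2) * Real.log ((Norm.norm (1 - (starRingEnd ℂ) w * z) + Norm.norm (z - w))^2
          / ((1 - (Norm.norm z)^2) * (1 + Norm.norm w)^2)))
        (nhds ζ)
        (nhds ((1/2) * Real.log ((Norm.norm (ζ - z))^2 / (1 - (Norm.norm z)^2)))) := by
      apply Filter.Tendsto.const_mul
      exact (Real.continuousAt_log (ne_of_gt (div_pos (by positivity) (by linarith)))).tendsto.comp hcont
    have := hlog.comp hconv
    apply this.congr
    intro n
    simp only [Function.comp_apply]
    exact (pd_sub z (u n) hz (hu n)).symm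
  have hratio_pos : ∀ z : ℂ, Norm.norm z < 1 →
      0 < (Norm.norm (ζ - z))^2 / (1 - (Norm.norm z)^2) := by
    intro z hz
    have hzζ : z ≠ ζ := by
      intro h; rw [h, hζ] at hz; exact lt_irrefl 1 hz
    have habsζz : 0 < Norm.norm (ζ - z) := by
      rw [norm_pos_iff]
      intro h; exact hzζ (by linear_combination -h)
    have hz2 : (Norm.norm z)^2 < 1 := by nlinarith [norm_nonneg z]
    apply div_pos (by positivity) (by linarith)
  have hEq : ∀ R > (0 : ℝ), discE 0 u R =
      {z : ℂ | Norm.norm z < 1 ∧ (Norm.norm (ζ - z)) ^ 2 / (1 - (Norm.norm z) ^ 2) < R} := by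
    intro R hR
    ext z
    simp only [discE, mem_setOf_eq]
    refine and_congr_right fun hz => ?_
    rw [(key z hz).limsup_eq]
    rw [mul_lt_mul_iff_right₀ (by norm_num : (0:ℝ) < 1/2)]
    exact Real.log_lt_log_iff (hratio_pos z hz) hR
  refine ⟨hEq, ?_, ?_⟩
  · -- pd 0 (u n) → ∞
    have habs : Filter.Tendsto (fun n => Norm.norm (u n)) Filter.atTop (nhds 1) := by
      have := (continuous_norm.tendsto ζ).comp hconv
      rwa [hζ] at this
    have hden : Filter.Tendsto (fun n => 1 - Norm.norm (u n)) Filter.atTop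
        (nhdsWithin 0 (Set.Ioi 0)) := by
      apply tendsto_nhdsWithin_of_tendsto_nhds_of_eventually_within
      · have : Filter.Tendsto (fun n => 1 - Norm.norm (u n)) Filter.atTop (nhds (1 - 1)) :=
          tendsto_const_nhds.sub habs
        simpa using this
      · filter_upwards with n
        simp only [Set.mem_Ioi, sub_pos]
        exact hu n
    have hinv : Filter.Tendsto (fun n => (1 - Norm.norm (u n))⁻¹) Filter.atTop Filter.atTop :=
      Filter.Tendsto.inv_tendsto_nhdsGT_zero hden
    have hnum : Filter.Tendsto (fun n => 1 + Norm.norm (u n)) Filter.atTop (nhds 2) := by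
      have : Filter.Tendsto (fun n => 1 + Norm.norm (u n)) Filter.atTop (nhds (1 + 1)) :=
        tendsto_const_nhds.add habs
      simpa [one_add_one_eq_two] using this
    have hfrac : Filter.Tendsto (fun n => (1 + Norm.norm (u n)) / (1 - Norm.norm (u n)))
        Filter.atTop Filter.atTop := by
      simp only [div_eq_mul_inv]
      exact Filter.Tendsto.pos_mul_atTop (by norm_num) hnum hinv
    have hlog := Real.tendsto_log_atTop.comp hfrac
    have : Filter.Tendsto (fun n => (1/2 : ℝ) * Real.log ((1 + Norm.norm (u n)) / (1 - Norm.norm (u n))))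
        Filter.atTop Filter.atTop :=
      Filter.Tendsto.const_mul_atTop (by norm_num) hlog
    apply this.congr
    intro n
    rw [pd_zero, artanh]
  · -- nonempty
    intro R hR
    rw [hEq R hR]
    refine ⟨((1/(1+R) : ℝ) : ℂ) * ζ, ?_, ?_⟩
    · have h1R : (0:ℝ) < 1 + R := by linarith
      rw [norm_mul, hζ, mul_one, Complex.norm_real, Real.norm_eq_abs, abs_of_pos (by positivity)]
      rw [div_lt_one h1R]; linarith
    · have h1R : (0:ℝ) < 1 + R := by linarith
      have habs1 : Norm.norm (((1/(1+R) : ℝ) : ℂ) * ζ) = 1/(1+R) := by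
        rw [norm_mul, hζ, mul_one, Complex.norm_real, Real.norm_eq_abs, abs_of_pos (by positivity)]
      have habs2 : Norm.norm (ζ - ((1/(1+R) : ℝ) : ℂ) * ζ) = R/(1+R) := by
        have hcne : (1 : ℂ) + (R : ℂ) ≠ 0 := by
          exact_mod_cast h1R.ne'
        have : ζ - ((1/(1+R) : ℝ) : ℂ) * ζ = ((R/(1+R) : ℝ) : ℂ) * ζ := by
          push_cast
          field_simp
          ring
        rw [this, norm_mul, hζ, mul_one, Complex.norm_real, Real.norm_eq_abs, abs_of_pos (by positivity)]
      rw [habs1, habs2]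
      have hden : (0:ℝ) < 1 - (1/(1+R))^2 := by
        have : (1/(1+R) : ℝ) < 1 := by rw [div_lt_one h1R]; linarith
        nlinarith [div_pos one_pos h1R]
      have e : (R/(1+R) : ℝ)^2 / (1 - (1/(1+R))^2) = R/(R+2) := by
        rw [div_eq_div_iff (ne_of_gt hden) (by positivity : (R+2:ℝ) ≠ 0)]
        field_simp
        ring
      rw [e, div_lt_iff₀ (by linarith : (0:ℝ) < R+2)]
      nlinarith
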